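/- Let r, s be positive integers with s ≤ r, and let m, m' be integers. Then 0 ≤ ⌈(m−m')/s⌉·r + ⌈m'·r/s⌉ − (m·r)/s ≤ (1 − 1/s)·r + (1 − 1/s) < r, where the middle expression is a rational number. -/

import Mathlib

/-- For positive integers `s ≤ r` and integers `m, m'`:
`0 ≤ ⌈(m−m')/s⌉·r + ⌈m'·r/s⌉ − m·r/s ≤ (1 − 1/s)·r + (1 − 1/s) < r` in `ℚ`. -/
theorem ceil_chain_rat (r s : ℤ) (hs : 0 < s) (hsr : s ≤ r) (m m' : ℤ) :
    0 ≤ ((⌈((m - m' : ℚ)) / s⌉ : ℚ) * r + (⌈(m' * r : ℚ) / s⌉ : ℚ) - (m * r : ℚ) / s) ∧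
    ((⌈((m - m' : ℚ)) / s⌉ : ℚ) * r + (⌈(m' * r : ℚ) / s⌉ : ℚ) - (m * r : ℚ) / s)
      ≤ (1 - 1 / (s : ℚ)) * r + (1 - 1 / (s : ℚ)) ∧
    (1 - 1 / (s : ℚ)) * r + (1 - 1 / (s : ℚ)) < (r : ℚ) := by
  have hsQ : (0:ℚ) < s := by exact_mod_cast hs
  have hrQ : (0:ℚ) < r := by exact_mod_cast hs.trans_le hsr
  have hsrQ : (s:ℚ) ≤ r := by exact_mod_cast hsr
  set a := ⌈((m - m' : ℚ)) / s⌉ with ha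
  set b := ⌈(m' * r : ℚ) / s⌉ with hb
  have hle1 : ((m - m' : ℚ)) / s ≤ a := Int.le_ceil _
  have hle2 : ((m' * r : ℚ)) / s ≤ b := Int.le_ceil _
  rw [div_le_iff₀ hsQ] at hle1 hle2
  -- sharpened upper bounds from integrality
  have h1 : (s:ℚ) * a ≤ (m:ℚ) - m' + s - 1 := by
    have hlt : (a:ℚ) < ((m:ℚ) - m') / s + 1 := Int.ceil_lt_add_one _
    have hlt' : ((a:ℚ) - 1) * s < (m:ℚ) - m' := by
      rw [← lt_div_iff₀ hsQ]; linarith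
    have : (s:ℚ) * a < (m:ℚ) - m' + s := by nlinarith [hlt']
    have hz : s * a < m - m' + s := by exact_mod_cast this
    have hz' : s * a ≤ m - m' + s - 1 := by omega
    exact_mod_cast hz'
  have h2 : (s:ℚ) * b ≤ (m':ℚ) * r + s - 1 := by
    have hlt : (b:ℚ) < ((m':ℚ) * r) / s + 1 := Int.ceil_lt_add_one _
    have hlt' : ((b:ℚ) - 1) * s < (m':ℚ) * r := by
      rw [← lt_div_iff₀ hsQ]; linarith
    have : (s:ℚ) * b < (m':ℚ) * r + s := by nlinarith [hlt']
    have hz : s * b < m' * r + s := by exact_mod_cast this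
    have hz' : s * b ≤ m' * r + s - 1 := by omega
    exact_mod_cast hz'
  refine ⟨?_, ?_, ?_⟩
  · rw [sub_nonneg, div_le_iff₀ hsQ]
    nlinarith [mul_le_mul_of_nonneg_right hle1 hrQ.le, hle2]
  · rw [show (1 - 1/(s:ℚ)) * r + (1 - 1/(s:ℚ)) = (((s:ℚ)-1)*r + (s-1))/s by
      field_simp]
    rw [sub_le_iff_le_add, ← add_div, le_div_iff₀ hsQ]
    nlinarith [mul_le_mul_of_nonneg_right h1 hrQ.le, h2]
  · have hpos : (0:ℚ) < 1/(s:ℚ) := by positivity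
    have hh : (1/(s:ℚ)) * s = 1 := by field_simp
    nlinarith [mul_pos hpos (show (0:ℚ) < r + 1 - s by linarith), hh]
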